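/- arXiv:2510.10744 — 2 statements merged into one kernel-verified Lean document; each statement's English description precedes it below -/
import Mathlib

section
/- For every fixed k ≥ 1, the predictive information converges to the sub-extensive part of the block entropy as the future window grows: lim_{k'→∞} I_pred(k,k') = H₁(k). -/
open Filter Topology

/-- Block entropy: extensive part plus sub-extensive part. -/
noncomputable def blockEntropy (ℓ₀ : ℝ) (H₁ : ℕ → ℝ) (n : ℕ) : ℝ := n * ℓ₀ + H₁ n

/-- Predictive information `I_pred(k,k') = H(k) + H(k') − H(k+k')`. -/
noncomputable def Ipred (ℓ₀ : ℝ) (H₁ : ℕ → ℝ) (k k' : ℕ) : ℝ :=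
  blockEntropy ℓ₀ H₁ k + blockEntropy ℓ₀ H₁ k' - blockEntropy ℓ₀ H₁ (k + k')

/-- For every fixed `k ≥ 1`, the predictive information converges to the sub-extensive
part of the block entropy as the future window grows:
`lim_{k'→∞} I_pred(k,k') = H₁(k)`. -/
theorem Ipred_tendsto_subextensive
    (ℓ₀ : ℝ) (H₁ : ℕ → ℝ)
    (h0 : H₁ 0 = 0)
    (hnonneg : ∀ n, 0 ≤ H₁ n)
    (hmono : Monotone H₁)
    (hsubadd : ∀ m n, H₁ (m + n) ≤ H₁ m + H₁ n)
    (hconcave : ∀ n, H₁ (n + 2) - H₁ (n + 1) ≤ H₁ (n + 1) - H₁ n)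
    (hsublin : Tendsto (fun n : ℕ => H₁ n / n) atTop (𝓝 0))
    (k : ℕ) (hk : 1 ≤ k) :
    Tendsto (fun k' : ℕ => Ipred ℓ₀ H₁ k k') atTop (𝓝 (H₁ k)) := by
  set Λ : ℕ → ℝ := fun n => H₁ (n + 1) - H₁ n with hΛ
  have hΛanti : Antitone Λ := by
    apply antitone_nat_of_succ_le
    intro n
    have := hconcave n
    simp only [hΛ]
    linarith [hconcave n]
  -- n * Λ n ≤ H₁ n
  have hbound : ∀ n : ℕ, (n : ℝ) * Λ n ≤ H₁ n := by
    intro n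
    induction n with
    | zero => simp [h0]
    | succ n ih =>
      have h1 : Λ (n + 1) ≤ Λ n := hΛanti (Nat.le_succ n)
      have h2 : ((n : ℝ) + 1) * Λ (n + 1) ≤ ((n : ℝ) + 1) * Λ n := by
        apply mul_le_mul_of_nonneg_left h1
        positivity
      have h3 : ((n : ℝ) + 1) * Λ n = (n : ℝ) * Λ n + Λ n := by ring
      have h4 : H₁ (n + 1) = H₁ n + Λ n := by simp [hΛ]
      push_cast
      linarith
  -- H₁ (k + n) - H₁ n ≤ k * Λ n
  have hstep : ∀ (m n : ℕ), H₁ (m + n) - H₁ n ≤ (m : ℝ) * Λ n := by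
    intro m n
    induction m with
    | zero => simp
    | succ m ih =>
      have h1 : Λ (m + n) ≤ Λ n := hΛanti (Nat.le_add_left n m)
      have he : m + 1 + n = (m + n) + 1 := by omega
      have h2 : H₁ (m + 1 + n) - H₁ (m + n) = Λ (m + n) := by
        rw [he, hΛ]
      push_cast
      linarith
  -- squeeze
  have hkey : Tendsto (fun n : ℕ => H₁ (k + n) - H₁ n) atTop (𝓝 0) := by
    apply squeeze_zero' (g := fun n : ℕ => (k : ℝ) * (H₁ n / n))
    · filter_upwards with n
      have := hmono (Nat.le_add_left n k)
      linarith
    · filter_upwards [eventually_ge_atTop 1] with n hn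
      have hn' : (0 : ℝ) < n := by exact_mod_cast hn
      have h1 := hstep k n
      have h2 : Λ n ≤ H₁ n / n := by
        rw [le_div_iff₀ hn']
        have := hbound n
        linarith [hbound n]
      calc H₁ (k + n) - H₁ n ≤ (k : ℝ) * Λ n := h1
        _ ≤ (k : ℝ) * (H₁ n / n) := by
            apply mul_le_mul_of_nonneg_left h2; positivity
    · simpa using hsublin.const_mul (k : ℝ)
  have heq : ∀ n : ℕ, Ipred ℓ₀ H₁ k n = H₁ k - (H₁ (k + n) - H₁ n) := by
    intro n
    simp only [Ipred, blockEntropy]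
    push_cast
    ring
  simp only [heq]
  have := (tendsto_const_nhds (x := H₁ k) (f := atTop (α := ℕ))).sub hkey
  simpa using this
end

section
/- For every fixed k ≥ 1, the increment of the predictive information in the past window converges to the universal learning curve as the future window grows: lim_{k'→∞} ( I_pred(k+1,k') − I_pred(k,k') ) = Λ(k) = H₁(k+1) − H₁(k). -/
open Filter Topology

/-- Universal learning curve `Λ(k) = H₁(k+1) − H₁(k)`. -/
noncomputable def learningCurve (H₁ : ℕ → ℝ) (k : ℕ) : ℝ := H₁ (k + 1) - H₁ k

/-- For every fixed `k ≥ 1`, the increment of the predictive information in the past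
window converges to the universal learning curve as the future window grows:
`lim_{k'→∞} (I_pred(k+1,k') − I_pred(k,k')) = Λ(k) = H₁(k+1) − H₁(k)`. -/
theorem Ipred_increment_tendsto_learningCurve
    (ℓ₀ : ℝ) (H₁ : ℕ → ℝ)
    (h0 : H₁ 0 = 0)
    (hnonneg : ∀ n, 0 ≤ H₁ n)
    (hmono : Monotone H₁)
    (hsubadd : ∀ m n, H₁ (m + n) ≤ H₁ m + H₁ n)
    (hconcave : ∀ n, H₁ (n + 2) - H₁ (n + 1) ≤ H₁ (n + 1) - H₁ n)
    (hsublin : Tendsto (fun n : ℕ => H₁ n / n) atTop (𝓝 0))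
    (k : ℕ) (hk : 1 ≤ k) :
    Tendsto (fun k' : ℕ => Ipred ℓ₀ H₁ (k + 1) k' - Ipred ℓ₀ H₁ k k') atTop
      (𝓝 (learningCurve H₁ k)) ∧
    learningCurve H₁ k = H₁ (k + 1) - H₁ k := by
  set g : ℕ → ℝ := fun n => H₁ (n + 1) - H₁ n with hg
  have hganti : ∀ m n, m ≤ n → g n ≤ g m := by
    intro m n hmn
    induction n with
    | zero => simp_all
    | succ n ih =>
      rcases Nat.lt_or_ge m (n + 1) with h | h
      · exact le_trans (hconcave n) (ih (Nat.lt_succ_iff.mp h))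
      · have : m = n + 1 := le_antisymm hmn h
        simp [this]
  have hgnonneg : ∀ n, 0 ≤ g n := fun n => sub_nonneg.mpr (hmono (Nat.le_succ n))
  have hsum : ∀ n : ℕ, (n + 1 : ℝ) * g n ≤ H₁ (n + 1) := by
    intro n
    have : H₁ (n + 1) = ∑ i ∈ Finset.range (n + 1), g i := by
      rw [Finset.sum_range_sub (fun i => H₁ i), h0, sub_zero]
    rw [this]
    have : (n + 1 : ℝ) * g n = ∑ _i ∈ Finset.range (n + 1), g n := by
      simp [mul_comm]
    rw [this]
    exact Finset.sum_le_sum fun i hi => hganti i n (Nat.lt_succ_iff.mp (Finset.mem_range.mp hi))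
  -- g n → 0 by squeeze with H₁(n+1)/(n+1)
  have hub : ∀ n : ℕ, g n ≤ H₁ (n + 1) / (n + 1) := by
    intro n
    rw [le_div_iff₀ (by positivity)]
    linarith [hsum n]
  have hshift : Tendsto (fun n : ℕ => H₁ (n + 1) / ((n : ℝ) + 1)) atTop (𝓝 0) := by
    have := hsublin.comp (tendsto_add_atTop_nat 1)
    simpa [Function.comp_def, Nat.cast_add, Nat.cast_one] using this
  have hg0 : Tendsto g atTop (𝓝 0) :=
    squeeze_zero hgnonneg hub hshift
  have hgk0 : Tendsto (fun k' : ℕ => g (k + k')) atTop (𝓝 0) := by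
    have := hg0.comp (tendsto_add_atTop_nat k)
    simpa [Function.comp_def, Nat.add_comm] using this
  constructor
  · have heq : ∀ k' : ℕ, Ipred ℓ₀ H₁ (k + 1) k' - Ipred ℓ₀ H₁ k k'
        = learningCurve H₁ k - g (k + k') := by
      intro k'
      simp only [Ipred, blockEntropy, learningCurve, hg]
      have h1 : ((k : ℝ) + 1) = ((k + 1 : ℕ) : ℝ) := by push_cast; ring
      have h2 : (k + 1 + k') = (k + k') + 1 := by ring
      rw [h2]
      push_cast
      ring
    rw [show learningCurve H₁ k = learningCurve H₁ k - 0 by ring]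
    simpa [heq] using (tendsto_const_nhds.sub hgk0)
  · rfl
end
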